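/- Let d, w, u, s, δ be real numbers with s ≥ 0, u > 0, w − d > e (where e = exp(1)), 0 < δ < 1/2, and suppose (w − d) − s·log(w − d) > 0. If (w + u − d) − s·log(w + u − d) < (1/(1 − 2δ)) · ((w − d) − s·log(w − d)), then (w − d)/(w + u − d) > 1 − 2δ. -/

import Mathlib

/-- Claim 1 of the gap lemma: if `s ≥ 0`, `u > 0`, `w - d > e`, `0 < δ < 1/2`,
`(w-d) - s log(w-d) > 0` and
`(w+u-d) - s log(w+u-d) < (1/(1-2δ)) ((w-d) - s log(w-d))`,
then `(w-d)/(w+u-d) > 1 - 2δ`. -/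
theorem gap_claim_one (d w u s δ : ℝ) (hs : 0 ≤ s) (hu : 0 < u)
    (hw : Real.exp 1 < w - d) (hδ0 : 0 < δ) (hδ : δ < 1 / 2)
    (hpos : 0 < (w - d) - s * Real.log (w - d))
    (h : (w + u - d) - s * Real.log (w + u - d) <
      (1 / (1 - 2 * δ)) * ((w - d) - s * Real.log (w - d))) :
    1 - 2 * δ < (w - d) / (w + u - d) := by
  set a := w - d with ha
  have hb : w + u - d = a + u := by ring
  rw [hb] at h ⊢
  have ha0 : 0 < a := lt_trans (Real.exp_pos 1) hw
  have hb0 : 0 < a + u := by linarith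
  have hδ' : 0 < 1 - 2 * δ := by linarith
  -- log y / y antitone
  have hmono : Real.log (a + u) / (a + u) ≤ Real.log a / a := by
    apply Real.log_div_self_antitoneOn (by exact le_of_lt hw)
      (by show Real.exp 1 ≤ a + u; linarith) (by linarith)
  -- f(a+u) ≥ (a+u)/a * f(a)
  have key : (a + u) / a * (a - s * Real.log a) ≤ (a + u) - s * Real.log (a + u) := by
    have h1 : s * Real.log (a + u) ≤ s * ((a + u) * (Real.log a / a)) := by
      apply mul_le_mul_of_nonneg_left _ hs
      have := mul_le_mul_of_nonneg_left hmono (le_of_lt hb0)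
      calc Real.log (a + u) = (a + u) * (Real.log (a + u) / (a + u)) := by
              field_simp
        _ ≤ (a + u) * (Real.log a / a) := this
    have h2 : (a + u) / a * (a - s * Real.log a)
        = (a + u) - s * ((a + u) * (Real.log a / a)) := by
      field_simp
    linarith
  have hlt : (a + u) / a * (a - s * Real.log a)
      < 1 / (1 - 2 * δ) * (a - s * Real.log a) := lt_of_le_of_lt key h
  have hratio : (a + u) / a < 1 / (1 - 2 * δ) :=
    lt_of_mul_lt_mul_right hlt (le_of_lt hpos) |>.trans_le le_rfl
  have h3 : (1 - 2 * δ) * (a + u) < a := by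
    have := (div_lt_div_iff₀ ha0 hδ').mp hratio
    nlinarith
  exact (lt_div_iff₀ hb0).mpr (by linarith)
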